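/- Let ℓ > 0, m ∈ ℕ with m ≥ 2, h = ℓ/m, x_i = ih, and let Φ : [0,ℓ] → ℝ be absolutely continuous with Φ(x) = Φ(0) + ∫_0^x Φ'(y) dy and Φ' ∈ L²(0,ℓ). Define Φ_i = (1/h)∫_{x_i}^{x_{i+1}} Φ(x) dx for i = 0,…,m−1 and Φ_m = Φ(ℓ). Then Σ_{i=0}^{m−1} h ((Φ_{i+1} − Φ_i)/h)² ≤ ∫_0^ℓ Φ'(x)² dx + ∫_{ℓ−h}^{ℓ} Φ'(x)² dx. -/

import Mathlib

open MeasureTheory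

lemma cs_aux (a b : ℝ) (hab : a ≤ b) (g : ℝ → ℝ)
    (h1 : IntervalIntegrable g volume a b)
    (h2 : IntervalIntegrable (fun x => g x ^ 2) volume a b) :
    (∫ x in a..b, g x) ^ 2 ≤ (b - a) * ∫ x in a..b, g x ^ 2 := by
  rcases eq_or_lt_of_le hab with rfl | hlt
  · simp
  have hba : 0 < b - a := by linarith
  set I := ∫ x in a..b, g x with hI
  set c : ℝ := I / (b - a) with hc
  have hnn : 0 ≤ ∫ x in a..b, (g x - c) ^ 2 :=
    intervalIntegral.integral_nonneg hab fun x _ => sq_nonneg _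
  have hfun : (fun x => (g x - c) ^ 2) = fun x => (g x ^ 2 - (2*c) * g x) + c^2 :=
    funext fun x => by ring
  rw [hfun, intervalIntegral.integral_add (h2.sub (h1.const_mul _)) intervalIntegrable_const,
      intervalIntegral.integral_sub h2 (h1.const_mul _),
      intervalIntegral.integral_const_mul, intervalIntegral.integral_const, smul_eq_mul] at hnn
  have hcb : (b - a) * c = I := by rw [hc]; field_simp
  set J := ∫ x in a..b, g x ^ 2 with hJ
  have key : (b - a) * ((J - 2*c*I) + (b-a) * c^2) = (b-a)*J - 2*I*((b-a)*c) + ((b-a)*c)^2 := by ring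
  have h0 := mul_nonneg hba.le hnn
  rw [key, hcb] at h0
  nlinarith [h0]

set_option maxHeartbeats 1000000 in
theorem steklov_space_difference_bound (ℓ : ℝ) (hℓ : 0 < ℓ) (m : ℕ) (hm : 2 ≤ m)
    (Φ Φ' : ℝ → ℝ)
    (hint : IntegrableOn Φ' (Set.Icc (0 : ℝ) ℓ))
    (hac : ∀ x ∈ Set.Icc (0 : ℝ) ℓ, Φ x = Φ 0 + ∫ y in (0 : ℝ)..x, Φ' y)
    (hL2 : MemLp Φ' 2 (volume.restrict (Set.Ioc (0 : ℝ) ℓ)))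
    (Φd : ℕ → ℝ)
    (hΦd : ∀ i < m,
      Φd i = (1 / (ℓ / m)) * ∫ x in (i : ℝ) * (ℓ / m)..((i : ℝ) + 1) * (ℓ / m), Φ x)
    (hΦm : Φd m = Φ ℓ) :
    ∑ i ∈ Finset.range m, (ℓ / m) * ((Φd (i + 1) - Φd i) / (ℓ / m)) ^ 2
      ≤ (∫ x in (0 : ℝ)..ℓ, (Φ' x) ^ 2) + ∫ x in (ℓ - ℓ / m)..ℓ, (Φ' x) ^ 2 := by
  have hm2 : (2:ℝ) ≤ (m:ℝ) := by exact_mod_cast hm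
  have hm0 : (0:ℝ) < (m:ℝ) := by linarith
  set h : ℝ := ℓ / m with hdef
  have hh : 0 < h := div_pos hℓ hm0
  have hmh : (m:ℝ) * h = ℓ := by rw [hdef]; field_simp
  have h2ℓ : 2 * h ≤ ℓ := by nlinarith
  -- indicator function and its primitives
  set g : ℝ → ℝ := (Set.Icc (0:ℝ) ℓ).indicator Φ' with hg
  have hgi : Integrable g := (integrable_indicator_iff measurableSet_Icc).2 hint
  have hsqΦ : IntegrableOn (fun x => Φ' x ^ 2) (Set.Icc (0:ℝ) ℓ) :=
    (integrableOn_Icc_iff_integrableOn_Ioc (f := fun x => Φ' x ^ 2) (a := 0) (b := ℓ)).2 hL2.integrable_sq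
  have hg2eq : (fun x => g x ^ 2) = (Set.Icc (0:ℝ) ℓ).indicator (fun x => Φ' x ^ 2) := by
    funext x
    by_cases hx : x ∈ Set.Icc (0:ℝ) ℓ
    · rw [hg, Set.indicator_of_mem hx, Set.indicator_of_mem hx]
    · rw [hg, Set.indicator_of_notMem hx, Set.indicator_of_notMem hx]
      norm_num
  have hg2i : Integrable (fun x => g x ^ 2) := by
    rw [hg2eq]; exact (integrable_indicator_iff measurableSet_Icc).2 hsqΦ
  set Q : ℝ → ℝ := fun t => ∫ y in (0:ℝ)..t, g y with hQ
  set P : ℝ → ℝ := fun t => ∫ y in (0:ℝ)..t, g y ^ 2 with hP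
  have hQC : Continuous Q :=
    intervalIntegral.continuous_primitive (fun a b => hgi.intervalIntegrable) 0
  have hPC : Continuous P :=
    intervalIntegral.continuous_primitive (fun a b => hg2i.intervalIntegrable) 0
  have hQsub : ∀ a b : ℝ, Q b - Q a = ∫ y in a..b, g y := fun a b =>
    intervalIntegral.integral_interval_sub_left hgi.intervalIntegrable hgi.intervalIntegrable
  have hPsub : ∀ a b : ℝ, P b - P a = ∫ y in a..b, g y ^ 2 := fun a b =>
    intervalIntegral.integral_interval_sub_left hg2i.intervalIntegrable hg2i.intervalIntegrable
  have hPmono : ∀ a b : ℝ, a ≤ b → P a ≤ P b := by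
    intro a b hab
    have h1 := hPsub a b
    have h0 : 0 ≤ ∫ y in a..b, g y ^ 2 :=
      intervalIntegral.integral_nonneg hab fun x _ => sq_nonneg _
    linarith
  have hP0 : P 0 = 0 := by simp [hP]
  -- Φ equals Φ 0 + Q on [0,ℓ]
  have hΦQ : ∀ x ∈ Set.Icc (0:ℝ) ℓ, Φ x = Φ 0 + Q x := by
    intro x hx
    rw [hac x hx]
    congr 1
    apply intervalIntegral.integral_congr
    intro y hy
    rw [Set.uIcc_of_le hx.1] at hy
    have hmem : y ∈ Set.Icc (0:ℝ) ℓ := ⟨hy.1, le_trans hy.2 hx.2⟩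
    rw [hg, Set.indicator_of_mem hmem]
  have hgle : ∀ i : ℕ, i + 1 ≤ m → ((i:ℝ)+1) * h ≤ ℓ := by
    intro i hi
    have h1 : ((i:ℝ)+1) ≤ (m:ℝ) := by exact_mod_cast hi
    nlinarith
  have hΦdQ : ∀ i : ℕ, i < m →
      Φd i = (1/h) * ∫ x in ((i:ℝ)*h)..((i:ℝ)*h + h), (Φ 0 + Q x) := by
    intro i hi
    rw [hΦd i hi]
    have hlim : ((i:ℝ)+1) * h = (i:ℝ)*h + h := by ring
    rw [hlim]
    congr 1
    apply intervalIntegral.integral_congr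
    intro x hx
    rw [Set.uIcc_of_le (by linarith : (i:ℝ)*h ≤ (i:ℝ)*h + h)] at hx
    have hpos : (0:ℝ) ≤ (i:ℝ)*h := by positivity
    have hx0 : (0:ℝ) ≤ x := le_trans hpos hx.1
    have hle : (i:ℝ)*h + h ≤ ℓ := by
      have h1 := hgle i hi
      nlinarith
    have hxℓ : x ≤ ℓ := le_trans hx.2 hle
    exact hΦQ x ⟨hx0, hxℓ⟩
  have hml : ((m-1:ℕ):ℝ) * h = ℓ - h := by
    rw [Nat.cast_sub (by omega : 1 ≤ m), Nat.cast_one, sub_mul, one_mul, hmh]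
  -- interior terms
  have key1 : ∀ i : ℕ, i + 1 < m →
      (Φd (i+1) - Φd i)^2 / h ≤ (1/h) * ∫ x in ((i:ℝ)*h)..((i:ℝ)*h + h), (P (x+h) - P x) := by
    intro i hi
    set a : ℝ := (i:ℝ)*h with ha
    have hi' : i < m := by omega
    have e0 : Φd (i+1) = (1/h) * ∫ x in a..(a+h), (Φ 0 + Q (x + h)) := by
      rw [hΦdQ (i+1) hi]
      have hlim : ((i+1:ℕ):ℝ)*h = a + h := by push_cast [ha]; ring
      rw [hlim]
      congr 1
      rw [intervalIntegral.integral_comp_add_right (fun x => Φ 0 + Q x) h]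
    have hDc : Continuous (fun x : ℝ => Q (x+h) - Q x) :=
      (hQC.comp (continuous_add_right h)).sub hQC
    have hD2c : Continuous (fun x : ℝ => (Q (x+h) - Q x)^2) := hDc.pow 2
    have eD : Φd (i+1) - Φd i = (1/h) * ∫ x in a..(a+h), (Q (x+h) - Q x) := by
      rw [e0, hΦdQ i hi', ← ha, ← mul_sub]
      congr 1
      have c1 : Continuous (fun x : ℝ => Φ 0 + Q (x + h)) :=
        continuous_const.add (hQC.comp (continuous_add_right h))
      have c2 : Continuous (fun x : ℝ => Φ 0 + Q x) := continuous_const.add hQC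
      rw [← intervalIntegral.integral_sub (c1.intervalIntegrable _ _) (c2.intervalIntegrable _ _)]
      apply intervalIntegral.integral_congr
      intro x _
      ring
    set I := ∫ x in a..(a+h), (Q (x+h) - Q x) with hIdef
    set K := ∫ x in a..(a+h), (P (x+h) - P x) with hKdef
    have cs1 : I^2 ≤ h * ∫ x in a..(a+h), (Q (x+h) - Q x)^2 := by
      have hcs := cs_aux a (a+h) (by linarith) (fun x => Q (x+h) - Q x)
        (hDc.intervalIntegrable _ _) (hD2c.intervalIntegrable _ _)
      have he : a + h - a = h := by ring
      rw [he] at hcs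
      exact hcs
    have pt : ∀ x ∈ Set.Icc a (a+h), (Q (x+h) - Q x)^2 ≤ h * (P (x+h) - P x) := by
      intro x _
      rw [hQsub x (x+h), hPsub x (x+h)]
      have hcs := cs_aux x (x+h) (by linarith) g (hgi.intervalIntegrable)
        (hg2i.intervalIntegrable)
      have he : x + h - x = h := by ring
      rw [he] at hcs
      exact hcs
    have cs2 : ∫ x in a..(a+h), (Q (x+h) - Q x)^2 ≤ h * K := by
      have cK : Continuous (fun x : ℝ => h * (P (x+h) - P x)) :=
        continuous_const.mul ((hPC.comp (continuous_add_right h)).sub hPC)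
      have hmono := intervalIntegral.integral_mono_on (μ := volume) (by linarith : a ≤ a + h)
        (hD2c.intervalIntegrable _ _)
        (cK.intervalIntegrable _ _)
        pt
      rwa [intervalIntegral.integral_const_mul] at hmono
    have final : I^2 ≤ h^2 * K := by nlinarith
    rw [eD]
    calc ((1/h) * I)^2 / h = I^2 / h^3 := by ring
      _ ≤ (h^2 * K) / h^3 := div_le_div_of_nonneg_right final (by positivity)
      _ = (1/h) * K := by field_simp
  -- telescoping sum of the interior bounds
  have hPΔint : ∀ k l : ℝ, IntervalIntegrable (fun x => P (x+h) - P x) volume k l :=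
    fun k l => ((hPC.comp (continuous_add_right h)).sub hPC).intervalIntegrable k l
  have hPint : ∀ k l : ℝ, IntervalIntegrable P volume k l :=
    fun k l => hPC.intervalIntegrable k l
  have sum1 : ∑ i ∈ Finset.range (m-1), ∫ x in ((i:ℝ)*h)..((i:ℝ)*h + h), (P (x+h) - P x)
      = ∫ x in (0:ℝ)..(ℓ - h), (P (x+h) - P x) := by
    have hadj := intervalIntegral.sum_integral_adjacent_intervals
      (f := fun x => P (x+h) - P x) (μ := volume) (a := fun i : ℕ => (i:ℝ)*h) (n := m-1)
      (fun k _ => hPΔint _ _)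
    have hc : ∀ k : ℕ, ((k+1:ℕ):ℝ)*h = (k:ℝ)*h + h := by
      intro k; push_cast; ring
    simp only [hc] at hadj
    rw [hadj, Nat.cast_zero, zero_mul, hml]
  have tele : ∫ x in (0:ℝ)..(ℓ-h), (P (x+h) - P x) ≤ h * P ℓ := by
    have cPh : Continuous (fun x : ℝ => P (x + h)) := hPC.comp (continuous_add_right h)
    rw [intervalIntegral.integral_sub (cPh.intervalIntegrable _ _) (hPint _ _),
      intervalIntegral.integral_comp_add_right P h, zero_add, sub_add_cancel]
    have e1 : ∫ x in h..ℓ, P x = (∫ x in h..(ℓ-h), P x) + ∫ x in (ℓ-h)..ℓ, P x :=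
      (intervalIntegral.integral_add_adjacent_intervals (hPint _ _) (hPint _ _)).symm
    have e2 : ∫ x in (0:ℝ)..(ℓ-h), P x = (∫ x in (0:ℝ)..h, P x) + ∫ x in h..(ℓ-h), P x :=
      (intervalIntegral.integral_add_adjacent_intervals (hPint _ _) (hPint _ _)).symm
    have e3 : 0 ≤ ∫ x in (0:ℝ)..h, P x :=
      intervalIntegral.integral_nonneg hh.le (fun x hx => by
        have := hPmono 0 x hx.1
        linarith [hP0])
    have e4 : ∫ x in (ℓ-h)..ℓ, P x ≤ h * P ℓ := by
      have hmono := intervalIntegral.integral_mono_on (by linarith : ℓ - h ≤ ℓ)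
        (hPint _ _) intervalIntegrable_const (fun x hx => hPmono x ℓ hx.2)
      rw [intervalIntegral.integral_const, smul_eq_mul] at hmono
      have : ℓ - (ℓ - h) = h := by ring
      rwa [this] at hmono
    linarith
  -- last term
  have key2 : (Φd m - Φd (m-1))^2 / h ≤ P ℓ - P (ℓ - h) := by
    have hm1 : m - 1 < m := by omega
    have hΦdm1 : Φd (m-1) = (1/h) * ∫ x in (ℓ-h)..ℓ, (Φ 0 + Q x) := by
      rw [hΦdQ (m-1) hm1, hml, sub_add_cancel]
    have hΦdm : Φd m = Φ 0 + Q ℓ := by rw [hΦm]; exact hΦQ ℓ ⟨hℓ.le, le_refl ℓ⟩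
    have econst : Φ 0 + Q ℓ = (1/h) * ∫ _x in (ℓ-h)..ℓ, (Φ 0 + Q ℓ) := by
      rw [intervalIntegral.integral_const, smul_eq_mul]
      have : ℓ - (ℓ - h) = h := by ring
      rw [this]
      field_simp
    have hEc : Continuous (fun x : ℝ => Q ℓ - Q x) := continuous_const.sub hQC
    have hE2c : Continuous (fun x : ℝ => (Q ℓ - Q x)^2) := hEc.pow 2
    have eE : Φd m - Φd (m-1) = (1/h) * ∫ x in (ℓ-h)..ℓ, (Q ℓ - Q x) := by
      rw [hΦdm, hΦdm1, econst, ← mul_sub]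
      congr 1
      rw [← intervalIntegral.integral_sub (f := fun _ => Φ 0 + Q ℓ) (g := fun x => Φ 0 + Q x) (intervalIntegrable_const)
        ((continuous_const.add hQC : Continuous (fun x => Φ 0 + Q x)).intervalIntegrable _ _)]
      apply intervalIntegral.integral_congr
      intro x _
      ring
    set I := ∫ x in (ℓ-h)..ℓ, (Q ℓ - Q x) with hIdef
    have cs1 : I^2 ≤ h * ∫ x in (ℓ-h)..ℓ, (Q ℓ - Q x)^2 := by
      have hcs := cs_aux (ℓ-h) ℓ (by linarith) (fun x => Q ℓ - Q x)
        (hEc.intervalIntegrable _ _) (hE2c.intervalIntegrable _ _)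
      have he : ℓ - (ℓ - h) = h := by ring
      rw [he] at hcs
      exact hcs
    have pt : ∀ x ∈ Set.Icc (ℓ-h) ℓ, (Q ℓ - Q x)^2 ≤ h * (P ℓ - P (ℓ-h)) := by
      intro x hx
      rw [hQsub x ℓ]
      have hcs := cs_aux x ℓ hx.2 g (hgi.intervalIntegrable) (hg2i.intervalIntegrable)
      rw [← hPsub x ℓ] at hcs
      have h1 : ℓ - x ≤ h := by linarith [hx.1]
      have h2 : 0 ≤ P ℓ - P x := by linarith [hPmono x ℓ hx.2]
      have h3 : P (ℓ-h) ≤ P x := hPmono _ _ hx.1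
      nlinarith
    have cs2 : ∫ x in (ℓ-h)..ℓ, (Q ℓ - Q x)^2 ≤ h * (h * (P ℓ - P (ℓ-h))) := by
      have hmono := intervalIntegral.integral_mono_on (μ := volume) (by linarith : ℓ - h ≤ ℓ)
        (hE2c.intervalIntegrable _ _) intervalIntegrable_const pt
      rw [intervalIntegral.integral_const, smul_eq_mul] at hmono
      have he : ℓ - (ℓ - h) = h := by ring
      rwa [he] at hmono
    have final : I^2 ≤ h^3 * (P ℓ - P (ℓ-h)) := by nlinarith
    rw [eE]
    calc ((1/h) * I)^2 / h = I^2 / h^3 := by ring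
      _ ≤ (h^3 * (P ℓ - P (ℓ-h))) / h^3 := div_le_div_of_nonneg_right final (by positivity)
      _ = P ℓ - P (ℓ-h) := by field_simp
  -- convert the right-hand side
  have hR1 : ∫ x in (0:ℝ)..ℓ, Φ' x ^ 2 = P ℓ := by
    apply intervalIntegral.integral_congr
    intro y hy
    rw [Set.uIcc_of_le hℓ.le] at hy
    simp only [hg, Set.indicator_of_mem hy]
  have hR2 : ∫ x in (ℓ-h)..ℓ, Φ' x ^ 2 = P ℓ - P (ℓ-h) := by
    rw [hPsub]
    apply intervalIntegral.integral_congr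
    intro y hy
    rw [Set.uIcc_of_le (by linarith : ℓ - h ≤ ℓ)] at hy
    have hmem : y ∈ Set.Icc (0:ℝ) ℓ := ⟨by linarith [hy.1], hy.2⟩
    simp only [hg, Set.indicator_of_mem hmem]
  rw [hR1, hR2]
  -- split off the last term of the sum
  have hterm : ∀ d : ℝ, h * (d / h)^2 = d^2 / h := by
    intro d; field_simp
  have hmm' : m - 1 + 1 = m := by omega
  have hsplit2 : ∑ i ∈ Finset.range m, h * ((Φd (i+1) - Φd i) / h)^2
      = (∑ i ∈ Finset.range (m-1), h * ((Φd (i+1) - Φd i) / h)^2)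
        + (Φd m - Φd (m-1))^2 / h := by
    have hs := Finset.sum_range_succ (fun i => h * ((Φd (i+1) - Φd i) / h)^2) (m-1)
    rw [hmm'] at hs
    rw [hs]
    congr 1
    exact hterm _
  rw [hsplit2]
  have sumbound : ∑ i ∈ Finset.range (m-1), h * ((Φd (i+1) - Φd i) / h)^2 ≤ P ℓ := by
    have step : ∀ i ∈ Finset.range (m-1), h * ((Φd (i+1) - Φd i) / h)^2
        ≤ (1/h) * ∫ x in ((i:ℝ)*h)..((i:ℝ)*h + h), (P (x+h) - P x) := by
      intro i hi
      rw [hterm]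
      have him := Finset.mem_range.1 hi
      exact key1 i (by omega)
    calc ∑ i ∈ Finset.range (m-1), h * ((Φd (i+1) - Φd i) / h)^2
        ≤ ∑ i ∈ Finset.range (m-1), (1/h) * ∫ x in ((i:ℝ)*h)..((i:ℝ)*h + h), (P (x+h) - P x) :=
          Finset.sum_le_sum step
      _ = (1/h) * ∑ i ∈ Finset.range (m-1), ∫ x in ((i:ℝ)*h)..((i:ℝ)*h + h), (P (x+h) - P x) :=
          (Finset.mul_sum _ _ _).symm
      _ = (1/h) * ∫ x in (0:ℝ)..(ℓ - h), (P (x+h) - P x) := by rw [sum1]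
      _ ≤ (1/h) * (h * P ℓ) := by
          apply mul_le_mul_of_nonneg_left tele (by positivity)
      _ = P ℓ := by field_simp
  linarith [key2, sumbound]
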